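/- Let Γ ∈ ℝ^{d×d} be symmetric positive definite, let g, y† ∈ ℝ^d, and let α ∈ (0, 1). Then the matrix-valued integral ∫_{ℝ^d} (y−g)(y−g)ᵀ f_gauss(y; g, Γ) f_gauss(y; y†, ((1−α)/α)Γ) dy equals f_gauss(y†; g, α⁻¹Γ) · [ (1−α)Γ + α²(y†−g)(y†−g)ᵀ ]. -/

import Mathlib

open MeasureTheory Matrix

/-- The Gaussian density `f_gauss(y; m, Σ) = det(2πΣ)^{-1/2} exp(-½ (y-m)ᵀ Σ⁻¹ (y-m))`. -/
noncomputable def fgauss {d : ℕ} (m : Fin d → ℝ) (S : Matrix (Fin d) (Fin d) ℝ)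
    (y : Fin d → ℝ) : ℝ :=
  (Real.sqrt ((2 * Real.pi) ^ d * S.det))⁻¹ *
    Real.exp (-(1 / 2 : ℝ) * ((y - m) ⬝ᵥ S⁻¹ *ᵥ (y - m)))

section Aux
open Real Set Filter Finset

variable {d : ℕ}

lemma int0 : Integrable (fun x : ℝ => Real.exp (-(1/2 : ℝ) * x ^ 2)) := by
  simpa using integrable_exp_neg_mul_sq (by norm_num : (0:ℝ) < 1/2)

lemma int1 : Integrable (fun x : ℝ => x * Real.exp (-(1/2 : ℝ) * x ^ 2)) := by
  simpa using integrable_mul_exp_neg_mul_sq (by norm_num : (0:ℝ) < 1/2)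

lemma int2 : Integrable (fun x : ℝ => x ^ 2 * Real.exp (-(1/2 : ℝ) * x ^ 2)) := by
  have := integrable_rpow_mul_exp_neg_mul_sq (by norm_num : (0:ℝ) < 1/2)
    (by norm_num : (-1 : ℝ) < 2)
  have h : ∀ x : ℝ, x ^ (2:ℝ) = x ^ 2 := fun x => by
    rw [show (2:ℝ) = ((2:ℕ):ℝ) by norm_num, Real.rpow_natCast]
  simpa [h] using this

lemma val0 : ∫ x : ℝ, Real.exp (-(1/2 : ℝ) * x ^ 2) = Real.sqrt (2 * π) := by
  have := integral_gaussian (1/2 : ℝ)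
  rw [show π / (1/2 : ℝ) = 2 * π by ring] at this
  simpa using this

lemma val1 : ∫ x : ℝ, x * Real.exp (-(1/2 : ℝ) * x ^ 2) = 0 := by
  have h : ∫ x : ℝ, -(x * Real.exp (-(1/2 : ℝ) * x ^ 2)) =
      ∫ x : ℝ, x * Real.exp (-(1/2 : ℝ) * x ^ 2) := by
    calc ∫ x : ℝ, -(x * Real.exp (-(1/2 : ℝ) * x ^ 2))
        = ∫ x : ℝ, (-x) * Real.exp (-(1/2 : ℝ) * (-x) ^ 2) := by
          congr 1; funext x; ring_nf
      _ = _ := integral_neg_eq_self (fun x : ℝ => x * Real.exp (-(1/2 : ℝ) * x ^ 2)) volume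
  rw [integral_neg] at h
  linarith [h]

lemma val2 : ∫ x : ℝ, x ^ 2 * Real.exp (-(1/2 : ℝ) * x ^ 2) = Real.sqrt (2 * π) := by
  have key : ∫ x in Ioi (0:ℝ), (Real.exp (-(1/2 : ℝ) * x ^ 2)
      - x ^ 2 * Real.exp (-(1/2 : ℝ) * x ^ 2)) = 0 := by
    have hderiv : ∀ x ∈ Ici (0:ℝ), HasDerivAt (fun t : ℝ => t * Real.exp (-(1/2 : ℝ) * t ^ 2))
        (Real.exp (-(1/2 : ℝ) * x ^ 2) - x ^ 2 * Real.exp (-(1/2 : ℝ) * x ^ 2)) x := by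
      intro x _
      have h1 : HasDerivAt (fun t : ℝ => -(1/2 : ℝ) * t ^ 2) (-(1/2 : ℝ) * (2 * x)) x := by
        simpa using ((hasDerivAt_pow 2 x).const_mul (-(1/2 : ℝ)))
      have h2 := (h1.exp).const_mul x
      have h3 := ((hasDerivAt_id x).fun_mul (h1.exp))
      refine h3.congr_deriv ?_
      simp [Real.exp_ne_zero]; ring
    have htend : Tendsto (fun t : ℝ => t * Real.exp (-(1/2 : ℝ) * t ^ 2)) atTop (nhds 0) := by
      have ho := rpow_mul_exp_neg_mul_sq_isLittleO_exp_neg (by norm_num : (0:ℝ) < 1/2) 1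
      have ht : Tendsto (fun x : ℝ => Real.exp (-(1/2 : ℝ) * x)) atTop (nhds 0) := by
        have h' : Tendsto (fun x : ℝ => x / 2) atTop atTop :=
          Filter.tendsto_id.atTop_div_const (by norm_num)
        have h'' := Real.tendsto_exp_neg_atTop_nhds_zero.comp h'
        have : (fun x : ℝ => Real.exp (-(x / 2))) = fun x : ℝ => Real.exp (-(1/2 : ℝ) * x) := by
          funext x; ring_nf
        rw [← this]; exact h''
      have := ho.tendsto_zero_of_tendsto ht
      apply this.congr'
      filter_upwards [eventually_ge_atTop (0:ℝ)] with x hx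
      rw [Real.rpow_one]
    have hint : IntegrableOn (fun x : ℝ => Real.exp (-(1/2 : ℝ) * x ^ 2)
        - x ^ 2 * Real.exp (-(1/2 : ℝ) * x ^ 2)) (Ioi (0:ℝ)) :=
      (int0.sub int2).integrableOn
    have := integral_Ioi_of_hasDerivAt_of_tendsto
      (((hderiv 0 (Set.self_mem_Ici)).continuousAt).continuousWithinAt) (fun x hx => hderiv x (Set.Ioi_subset_Ici_self hx))
      hint htend
    simpa using this
  rw [integral_sub int0.integrableOn int2.integrableOn] at key
  have hg : ∫ x in Ioi (0:ℝ), Real.exp (-(1/2 : ℝ) * x ^ 2) = Real.sqrt (2*π) / 2 := by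
    have := integral_gaussian_Ioi (1/2 : ℝ)
    rw [show π / (1/2 : ℝ) = 2 * π by ring] at this
    simpa using this
  have h2 : (∫ x : ℝ, x ^ 2 * Real.exp (-(1/2 : ℝ) * x ^ 2))
      = 2 * ∫ x in Ioi (0:ℝ), x ^ 2 * Real.exp (-(1/2 : ℝ) * x ^ 2) := by
    have h := integral_comp_abs (f := fun t : ℝ => t ^ 2 * Real.exp (-(1/2 : ℝ) * t ^ 2))
    simpa only [sq_abs] using h
  rw [h2]
  have : ∫ x in Ioi (0:ℝ), x ^ 2 * Real.exp (-(1/2 : ℝ) * x ^ 2) = Real.sqrt (2*π)/2 := by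
    rw [← hg]; linarith
  rw [this]; ring

noncomputable def gd (z : Fin d → ℝ) : ℝ := Real.exp (-(1/2 : ℝ) * (z ⬝ᵥ z))

lemma gd_eq_prod (z : Fin d → ℝ) : gd z = ∏ i, Real.exp (-(1/2 : ℝ) * (z i) ^ 2) := by
  rw [gd, dotProduct, Finset.mul_sum, ← Real.exp_sum]
  congr 1
  exact Finset.sum_congr rfl fun i _ => by ring

lemma prod_aux (k : Fin d) (z : Fin d → ℝ) :
    (∏ i, (if i = k then z i else 1)) = z k := by
  simp [Finset.prod_ite_eq' Finset.univ k]

lemma gdk_eq_prod (k : Fin d) (z : Fin d → ℝ) :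
    z k * gd z = ∏ i, ((if i = k then z i else 1) * Real.exp (-(1/2 : ℝ) * (z i) ^ 2)) := by
  rw [Finset.prod_mul_distrib, prod_aux, ← gd_eq_prod]

lemma gdkl_eq_prod (k l : Fin d) (z : Fin d → ℝ) :
    z k * z l * gd z = ∏ i, ((if i = k then z i else 1) * (if i = l then z i else 1) *
      Real.exp (-(1/2 : ℝ) * (z i) ^ 2)) := by
  simp_rw [Finset.prod_mul_distrib, prod_aux, ← gd_eq_prod]


lemma I0 : Integrable (gd (d := d)) := by
  have h := Integrable.fintype_prod (E := ℝ)
    (f := fun (_ : Fin d) (x : ℝ) => Real.exp (-(1/2 : ℝ) * x ^ 2)) (fun _ => int0)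
  exact h.congr (by filter_upwards with z; rw [gd_eq_prod])

lemma I1 (k : Fin d) : Integrable (fun z : Fin d → ℝ => z k * gd z) := by
  have h := Integrable.fintype_prod (E := ℝ)
    (f := fun (i : Fin d) (x : ℝ) => (if i = k then x else 1) * Real.exp (-(1/2 : ℝ) * x ^ 2))
    (fun i => by
      split
      · exact int1
      · simpa only [one_mul] using int0)
  exact h.congr (by filter_upwards with z; rw [gdk_eq_prod])

lemma I2 (k l : Fin d) : Integrable (fun z : Fin d → ℝ => z k * z l * gd z) := by
  have h := Integrable.fintype_prod (E := ℝ) (μ := fun _ => volume)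
    (f := fun (i : Fin d) (x : ℝ) => (if i = k then x else 1) * (if i = l then x else 1) *
      Real.exp (-(1/2 : ℝ) * x ^ 2))
    (fun i => by
      rcases eq_or_ne i k with rfl | hik <;> rcases eq_or_ne i l with rfl | hil
      · simp only [if_pos rfl, if_true,
          show ∀ x : ℝ, x * x * Real.exp (-(1/2 : ℝ) * x ^ 2)
            = x ^ 2 * Real.exp (-(1/2 : ℝ) * x ^ 2) from fun x => by rw [pow_two]]
        exact int2
      · simp only [if_pos rfl, if_true, if_neg hil, mul_one]; exact int1
      · simp only [if_neg hik, if_pos rfl, if_true, one_mul]; exact int1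
      · simp only [if_neg hik, if_neg hil, one_mul]; exact int0)
  exact h.congr (by filter_upwards with z; rw [gdkl_eq_prod])

lemma D0 : ∫ z : Fin d → ℝ, gd z = Real.sqrt (2 * π) ^ d := by
  rw [show (fun z : Fin d → ℝ => gd z) = fun z => ∏ i, Real.exp (-(1/2:ℝ) * (z i)^2) from
    funext gd_eq_prod]
  rw [integral_fintype_prod_volume_eq_prod (f := fun (_ : Fin d) (x : ℝ) =>
    Real.exp (-(1/2:ℝ) * x ^ 2))]
  simp only [val0, Finset.prod_const, Finset.card_univ, Fintype.card_fin]

lemma D1 (k : Fin d) : ∫ z : Fin d → ℝ, z k * gd z = 0 := by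
  rw [show (fun z : Fin d → ℝ => z k * gd z) = fun z => ∏ i,
    ((if i = k then z i else 1) * Real.exp (-(1/2:ℝ) * (z i)^2)) from funext (gdk_eq_prod k)]
  rw [integral_fintype_prod_volume_eq_prod (f := fun (i : Fin d) (x : ℝ) =>
    (if i = k then x else 1) * Real.exp (-(1/2:ℝ) * x ^ 2))]
  apply Finset.prod_eq_zero (Finset.mem_univ k)
  simp only [eq_self_iff_true, if_true]
  exact val1

lemma D2 (k l : Fin d) : ∫ z : Fin d → ℝ, z k * z l * gd z =
    (if k = l then 1 else 0) * Real.sqrt (2 * π) ^ d := by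
  rw [show (fun z : Fin d → ℝ => z k * z l * gd z) = fun z => ∏ i,
    ((if i = k then z i else 1) * (if i = l then z i else 1) *
      Real.exp (-(1/2:ℝ) * (z i)^2)) from funext (gdkl_eq_prod k l)]
  rw [integral_fintype_prod_volume_eq_prod (f := fun (i : Fin d) (x : ℝ) =>
    (if i = k then x else 1) * (if i = l then x else 1) * Real.exp (-(1/2:ℝ) * x ^ 2))]
  rcases eq_or_ne k l with rfl | hkl
  · rw [if_pos rfl, one_mul]
    have : ∀ i : Fin d, (∫ x : ℝ, (if i = k then x else 1) * (if i = k then x else 1) *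
        Real.exp (-(1/2:ℝ) * x ^ 2)) = if i = k then Real.sqrt (2*π) else Real.sqrt (2*π) := by
      intro i
      split
      · simp only [show ∀ x : ℝ, x * x * Real.exp (-(1/2 : ℝ) * x ^ 2)
            = x ^ 2 * Real.exp (-(1/2 : ℝ) * x ^ 2) from fun x => by rw [pow_two]]
        exact val2
      · simp only [one_mul]; exact val0
    rw [Finset.prod_congr rfl (fun i _ => this i)]
    simp
  · rw [if_neg hkl, zero_mul]
    apply Finset.prod_eq_zero (Finset.mem_univ k)
    simp only [eq_self_iff_true, if_true, if_neg hkl, mul_one]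
    exact val1

lemma chvar (M : Matrix (Fin d) (Fin d) ℝ) (hM : M.det ≠ 0) (F : (Fin d → ℝ) → ℝ)
    (hF : AEStronglyMeasurable F (volume : Measure (Fin d → ℝ))) :
    ∫ v : Fin d → ℝ, F v = |M.det| * ∫ z : Fin d → ℝ, F (M *ᵥ z) := by
  have hmap := Real.map_matrix_volume_pi_eq_smul_volume_pi hM
  have hT : Continuous (Matrix.toLin' M) := LinearMap.continuous_of_finiteDimensional _
  have h1 : ∫ v, F v ∂(Measure.map (Matrix.toLin' M) volume)
      = ∫ z, F (M *ᵥ z) := by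
    rw [integral_map hT.aemeasurable]
    · simp only [Matrix.toLin'_apply]
    · rw [hmap]; exact hF.mono_ac Measure.smul_absolutelyContinuous
  rw [hmap, integral_smul_measure] at h1
  rw [ENNReal.toReal_ofReal (by positivity)] at h1
  have habs : |M.det| ≠ 0 := by simpa using hM
  rw [abs_inv] at h1
  field_simp at h1
  rw [← h1, smul_eq_mul]; field_simp

lemma core (a b : Fin d → ℝ) (ci cj : ℝ) :
    ∫ z : Fin d → ℝ, (∑ k, a k * z k + ci) * (∑ l, b l * z l + cj) * gd z
      = ((∑ k, a k * b k) + ci * cj) * Real.sqrt (2 * π) ^ d := by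
  have hfun : (fun z : Fin d → ℝ => (∑ k, a k * z k + ci) * (∑ l, b l * z l + cj) * gd z)
      = fun z => (∑ k, ∑ l, a k * b l * (z k * z l * gd z))
        + ((∑ k, (ci * b k) * (z k * gd z)) + ((∑ k, (cj * a k) * (z k * gd z))
        + (ci * cj) * gd z)) := by
    funext z
    have e1 : (∑ k, a k * z k) * (∑ l, b l * z l) * gd z
        = ∑ k, ∑ l, a k * b l * (z k * z l * gd z) := by
      rw [Finset.sum_mul_sum, Finset.sum_mul]
      refine Finset.sum_congr rfl fun k _ => ?_
      rw [Finset.sum_mul]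
      exact Finset.sum_congr rfl fun l _ => by ring
    have e2 : ci * ((∑ l, b l * z l) * gd z) = ∑ k, (ci * b k) * (z k * gd z) := by
      rw [Finset.sum_mul, Finset.mul_sum]
      exact Finset.sum_congr rfl fun l _ => by ring
    have e3 : cj * ((∑ k, a k * z k) * gd z) = ∑ k, (cj * a k) * (z k * gd z) := by
      rw [Finset.sum_mul, Finset.mul_sum]
      exact Finset.sum_congr rfl fun l _ => by ring
    calc (∑ k, a k * z k + ci) * (∑ l, b l * z l + cj) * gd z
        = (∑ k, a k * z k) * (∑ l, b l * z l) * gd z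
          + (ci * ((∑ l, b l * z l) * gd z) + (cj * ((∑ k, a k * z k) * gd z)
          + (ci * cj) * gd z)) := by ring
      _ = _ := by rw [e1, e2, e3]
  rw [hfun]
  have Ia : Integrable (fun z : Fin d → ℝ => ∑ k, ∑ l, a k * b l * (z k * z l * gd z)) :=
    integrable_finset_sum _ fun k _ => integrable_finset_sum _ fun l _ => (I2 k l).const_mul _
  have Ib : Integrable (fun z : Fin d → ℝ => ∑ k, (ci * b k) * (z k * gd z)) :=
    integrable_finset_sum _ fun k _ => (I1 k).const_mul _
  have Ic : Integrable (fun z : Fin d → ℝ => ∑ k, (cj * a k) * (z k * gd z)) :=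
    integrable_finset_sum _ fun k _ => (I1 k).const_mul _
  have Id' : Integrable (fun z : Fin d → ℝ => (ci * cj) * gd z) := I0.const_mul _
  have Icd : Integrable (fun z : Fin d → ℝ =>
      ∑ k, (cj * a k) * (z k * gd z) + (ci * cj) * gd z) := by exact Ic.add Id'
  have Ibcd : Integrable (fun z : Fin d → ℝ => ∑ k, (ci * b k) * (z k * gd z)
      + (∑ k, (cj * a k) * (z k * gd z) + (ci * cj) * gd z)) := by exact Ib.add Icd
  rw [integral_add Ia Ibcd, integral_add Ib Icd, integral_add Ic Id']
  have vA : ∫ z : Fin d → ℝ, ∑ k, ∑ l, a k * b l * (z k * z l * gd z)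
      = ∑ k, a k * b k * Real.sqrt (2 * π) ^ d := by
    rw [integral_finset_sum _ fun k _ => integrable_finset_sum _ fun l _ =>
      (I2 k l).const_mul _]
    refine Finset.sum_congr rfl fun k _ => ?_
    rw [integral_finset_sum _ fun l _ => (I2 k l).const_mul _]
    have : ∀ l : Fin d, (∫ z : Fin d → ℝ, a k * b l * (z k * z l * gd z))
        = if k = l then a k * b l * Real.sqrt (2 * π) ^ d else 0 := by
      intro l
      rw [integral_const_mul, D2]
      split <;> simp_all
    rw [Finset.sum_congr rfl fun l _ => this l, Finset.sum_ite_eq]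
    simp
  have vB : ∫ z : Fin d → ℝ, ∑ k, (ci * b k) * (z k * gd z) = 0 := by
    rw [integral_finset_sum _ fun k _ => (I1 k).const_mul _]
    simp [integral_const_mul, D1]
  have vC : ∫ z : Fin d → ℝ, ∑ k, (cj * a k) * (z k * gd z) = 0 := by
    rw [integral_finset_sum _ fun k _ => (I1 k).const_mul _]
    simp [integral_const_mul, D1]
  have vD : ∫ z : Fin d → ℝ, (ci * cj) * gd z = ci * cj * Real.sqrt (2 * π) ^ d := by
    rw [integral_const_mul, D0]
  rw [vA, vB, vC, vD, add_mul, Finset.sum_mul]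
  ring

lemma sqrtpow (x : ℝ) (hx : 0 ≤ x) (n : ℕ) : Real.sqrt (x ^ n) = Real.sqrt x ^ n := by
  induction n with
  | zero => simp
  | succ n ih => rw [pow_succ, pow_succ, Real.sqrt_mul (by positivity), ih]

open scoped MatrixOrder in
lemma momE (S : Matrix (Fin d) (Fin d) ℝ) (hS : S.PosDef) (c : Fin d → ℝ) (i j : Fin d) :
    ∫ v : Fin d → ℝ, (v i + c i) * (v j + c j) *
      ((Real.sqrt ((2 * π) ^ d * S.det))⁻¹ * Real.exp (-(1/2 : ℝ) * (v ⬝ᵥ S⁻¹ *ᵥ v)))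
    = S i j + c i * c j := by
  set K := (Real.sqrt ((2 * π) ^ d * S.det))⁻¹ with hK
  set L := CFC.sqrt S with hLdef
  have hLL : L * L = S := CFC.sqrt_mul_sqrt_self S (Matrix.nonneg_iff_posSemidef.mpr hS.posSemidef)
  have hLsym : Lᵀ = L := by
    have := (Matrix.nonneg_iff_posSemidef.mp (CFC.sqrt_nonneg S)).1
    simpa [Matrix.IsHermitian, Matrix.conjTranspose_eq_transpose_of_trivial] using this
  have hdet2 : L.det * L.det = S.det := by rw [← Matrix.det_mul, hLL]
  have hSdet : 0 < S.det := hS.det_pos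
  have hLdet0 : L.det ≠ 0 := by
    intro h; rw [h, mul_zero] at hdet2; exact hSdet.ne hdet2
  have habs : |L.det| = Real.sqrt S.det := by
    rw [← hdet2, ← pow_two, Real.sqrt_sq_eq_abs]
  have hSinv : S⁻¹ = L⁻¹ * L⁻¹ := by rw [← hLL, Matrix.mul_inv_rev]
  have hone : Lᵀ * (S⁻¹ * L) = 1 := by
    rw [hLsym, hSinv, Matrix.mul_assoc, Matrix.nonsing_inv_mul L hLdet0.isUnit, Matrix.mul_one,
      Matrix.mul_nonsing_inv L hLdet0.isUnit]
  have hquad : ∀ z : Fin d → ℝ, (L *ᵥ z) ⬝ᵥ S⁻¹ *ᵥ (L *ᵥ z) = z ⬝ᵥ z := by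
    intro z
    rw [Matrix.mulVec_mulVec, Matrix.dotProduct_mulVec, ← Matrix.vecMul_transpose,
      Matrix.vecMul_vecMul, hone, Matrix.vecMul_one]
  have hcont : Continuous fun v : Fin d → ℝ => (v i + c i) * (v j + c j) *
      (K * Real.exp (-(1/2 : ℝ) * (v ⬝ᵥ S⁻¹ *ᵥ v))) := by
    have hq : Continuous fun v : Fin d → ℝ => v ⬝ᵥ S⁻¹ *ᵥ v := by
      simp only [dotProduct, Matrix.mulVec]
      exact continuous_finset_sum _ fun a _ => (continuous_apply a).mul
        (continuous_finset_sum _ fun b _ => (continuous_const.mul (continuous_apply b)))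
    exact (((continuous_apply i).add continuous_const).mul
      ((continuous_apply j).add continuous_const)).mul
      (continuous_const.mul (Real.continuous_exp.comp (continuous_const.mul hq)))
  rw [chvar L hLdet0 _ hcont.aestronglyMeasurable]
  simp only [hquad]
  have hgd : ∀ z : Fin d → ℝ, Real.exp (-(1/2 : ℝ) * (z ⬝ᵥ z)) = gd z := fun z => rfl
  simp only [hgd]
  have hbody : ∀ z : Fin d → ℝ, ((L *ᵥ z) i + c i) * ((L *ᵥ z) j + c j) * (K * gd z)
      = K * ((∑ k, L i k * z k + c i) * (∑ l, L j l * z l + c j) * gd z) := by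
    intro z
    have h1 : (L *ᵥ z) i = ∑ k, L i k * z k := by simp [Matrix.mulVec, dotProduct]
    have h2 : (L *ᵥ z) j = ∑ l, L j l * z l := by simp [Matrix.mulVec, dotProduct]
    rw [h1, h2]; ring
  simp only [hbody]
  rw [integral_const_mul, core]
  have hsum : ∑ k, L i k * L j k = S i j := by
    have h : (L * Lᵀ) i j = ∑ k, L i k * L j k := by
      simp [Matrix.mul_apply, Matrix.transpose_apply]
    rw [← h, hLsym, hLL]
  rw [hsum, habs, hK]
  have hsplit : Real.sqrt ((2 * π) ^ d * S.det)
      = Real.sqrt (2 * π) ^ d * Real.sqrt S.det := by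
    rw [Real.sqrt_mul (by positivity), sqrtpow _ (by positivity)]
  rw [hsplit]
  have h1 : (0:ℝ) < Real.sqrt S.det := Real.sqrt_pos.mpr hSdet
  have h2 : (0:ℝ) < Real.sqrt (2 * π) := Real.sqrt_pos.mpr (by positivity)
  field_simp

lemma posdef_smul {Γ : Matrix (Fin d) (Fin d) ℝ} (hΓ : Γ.PosDef) {c : ℝ} (hc : 0 < c) :
    (c • Γ).PosDef := by
  have hherm : (c • Γ).IsHermitian := by
    show (c • Γ)ᴴ = c • Γ
    rw [Matrix.conjTranspose_smul, hΓ.1.eq]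
    simp
  exact hΓ.smul hc

/-- the (entrywise) matrix-valued Gaussian second-moment identity
`∫ (y−g)(y−g)ᵀ f(y; g, Γ) f(y; y†, ((1−α)/α)Γ) dy
  = f(y†; g, α⁻¹Γ) [ (1−α)Γ + α²(y†−g)(y†−g)ᵀ ]`. -/
theorem stmt8 {d : ℕ} (Γ : Matrix (Fin d) (Fin d) ℝ) (hΓ : Γ.PosDef)
    (g ydag : Fin d → ℝ) (α : ℝ) (hα : α ∈ Set.Ioo (0 : ℝ) 1) :
    ∀ i j : Fin d,
      (∫ y : Fin d → ℝ,
        (y - g) i * (y - g) j * (fgauss g Γ y * fgauss ydag (((1 - α) / α) • Γ) y))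
      = fgauss g (α⁻¹ • Γ) ydag *
          ((1 - α) • Γ + α ^ 2 • vecMulVec (ydag - g) (ydag - g)) i j := by
  intro i j
  obtain ⟨hα0, hα1⟩ := hα
  have h1α : (0:ℝ) < 1 - α := by linarith
  set β : ℝ := (1 - α) / α with hβdef
  have hβ : 0 < β := div_pos h1α hα0
  have hdetΓ : 0 < Γ.det := hΓ.det_pos
  have hdetu : IsUnit Γ.det := hdetΓ.ne'.isUnit
  set S' : Matrix (Fin d) (Fin d) ℝ := (1 - α) • Γ with hS'def
  have hS' : S'.PosDef := posdef_smul hΓ h1α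
  set m' : Fin d → ℝ := fun t => g t + α * (ydag t - g t) with hm'def
  set c : Fin d → ℝ := fun t => α * (ydag t - g t) with hcdef
  -- smul inverse
  have hsmulinv : ∀ r : ℝ, r ≠ 0 → (r • Γ)⁻¹ = r⁻¹ • Γ⁻¹ := by
    intro r hr
    apply Matrix.inv_eq_right_inv
    rw [smul_mul_assoc, mul_smul_comm, smul_smul, mul_inv_cancel₀ hr,
      Matrix.mul_nonsing_inv _ hdetu, one_smul]
  -- symmetry of Γ⁻¹
  have hΓsym : Γᵀ = Γ := by
    have := hΓ.1
    simpa [Matrix.IsHermitian, Matrix.conjTranspose_eq_transpose_of_trivial] using this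
  have hAsym : (Γ⁻¹)ᵀ = Γ⁻¹ := by rw [Matrix.transpose_nonsing_inv, hΓsym]
  have hsym : ∀ u w : Fin d → ℝ, u ⬝ᵥ Γ⁻¹ *ᵥ w = w ⬝ᵥ Γ⁻¹ *ᵥ u := by
    intro u w
    rw [Matrix.dotProduct_mulVec, ← Matrix.mulVec_transpose, hAsym, dotProduct_comm]
  -- prefactor identity
  have hprefac : (Real.sqrt ((2*π)^d * Γ.det))⁻¹ * (Real.sqrt ((2*π)^d * (β • Γ).det))⁻¹
      = (Real.sqrt ((2*π)^d * (α⁻¹ • Γ).det))⁻¹ * (Real.sqrt ((2*π)^d * S'.det))⁻¹ := by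
    rw [hS'def]
    simp only [Matrix.det_smul, Fintype.card_fin]
    have hkey : ((2*π)^d * Γ.det) * ((2*π)^d * (β^d * Γ.det))
        = ((2*π)^d * ((α⁻¹)^d * Γ.det)) * ((2*π)^d * ((1-α)^d * Γ.det)) := by
      rw [hβdef, div_pow, inv_pow]
      field_simp
    rw [← mul_inv, ← mul_inv, ← Real.sqrt_mul (by positivity), ← Real.sqrt_mul (by positivity),
      hkey]
  -- exponent identity
  have hexp : ∀ y : Fin d → ℝ,
      (-(1/2:ℝ) * ((y - g) ⬝ᵥ Γ⁻¹ *ᵥ (y - g)))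
        + (-(1/2:ℝ) * ((y - ydag) ⬝ᵥ (β • Γ)⁻¹ *ᵥ (y - ydag)))
      = (-(1/2:ℝ) * ((ydag - g) ⬝ᵥ (α⁻¹ • Γ)⁻¹ *ᵥ (ydag - g)))
        + (-(1/2:ℝ) * ((y - m') ⬝ᵥ S'⁻¹ *ᵥ (y - m'))) := by
    intro y
    rw [hsmulinv β hβ.ne', hsmulinv α⁻¹ (by positivity), hS'def, hsmulinv (1-α) h1α.ne',
      inv_inv]
    have hyd : y - ydag = (y - g) - (ydag - g) := by funext t; simp
    have hym : y - m' = (y - g) - α • (ydag - g) := by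
      funext t; simp [hm'def, Pi.sub_apply, Pi.smul_apply, smul_eq_mul]; ring
    rw [hyd, hym]
    simp only [Matrix.smul_mulVec, dotProduct_smul, smul_eq_mul]
    have hq1 : ((y - g) - (ydag - g)) ⬝ᵥ Γ⁻¹ *ᵥ ((y - g) - (ydag - g))
        = (y - g) ⬝ᵥ Γ⁻¹ *ᵥ (y - g) - 2*((y - g) ⬝ᵥ Γ⁻¹ *ᵥ (ydag - g))
          + (ydag - g) ⬝ᵥ Γ⁻¹ *ᵥ (ydag - g) := by
      rw [Matrix.mulVec_sub, sub_dotProduct, dotProduct_sub,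
        dotProduct_sub, hsym (ydag - g) (y - g)]
      ring
    have hq2 : ((y - g) - α • (ydag - g)) ⬝ᵥ Γ⁻¹ *ᵥ ((y - g) - α • (ydag - g))
        = (y - g) ⬝ᵥ Γ⁻¹ *ᵥ (y - g) - 2*α*((y - g) ⬝ᵥ Γ⁻¹ *ᵥ (ydag - g))
          + α^2 * ((ydag - g) ⬝ᵥ Γ⁻¹ *ᵥ (ydag - g)) := by
      rw [Matrix.mulVec_sub, sub_dotProduct, dotProduct_sub,
        dotProduct_sub, Matrix.mulVec_smul, dotProduct_smul,
        smul_dotProduct, smul_dotProduct, dotProduct_smul,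
        hsym (ydag - g) (y - g)]
      simp only [smul_eq_mul]
      ring
    rw [hq1, hq2, hβdef]
    have hα' : α ≠ 0 := hα0.ne'
    have h1α' : (1 - α) ≠ 0 := h1α.ne'
    field_simp
    ring
  -- product of densities
  have hprod : ∀ y : Fin d → ℝ, fgauss g Γ y * fgauss ydag (β • Γ) y
      = fgauss g (α⁻¹ • Γ) ydag * ((Real.sqrt ((2*π)^d * S'.det))⁻¹ *
          Real.exp (-(1/2:ℝ) * ((y - m') ⬝ᵥ S'⁻¹ *ᵥ (y - m')))) := by
    intro y
    unfold fgauss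
    rw [mul_mul_mul_comm, hprefac, ← Real.exp_add, hexp y, Real.exp_add, mul_mul_mul_comm]
  have hco : ∀ y : Fin d → ℝ, ∀ t, (y - m') t + c t = (y - g) t := by
    intro y t; simp [hm'def, hcdef, Pi.sub_apply]; ring
  have hint : (fun y : Fin d → ℝ =>
        (y - g) i * (y - g) j * (fgauss g Γ y * fgauss ydag (β • Γ) y))
      = fun y => fgauss g (α⁻¹ • Γ) ydag * (((y - m') i + c i) * ((y - m') j + c j) *
          ((Real.sqrt ((2*π)^d * S'.det))⁻¹ *
            Real.exp (-(1/2:ℝ) * ((y - m') ⬝ᵥ S'⁻¹ *ᵥ (y - m'))))) := by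
    funext y
    rw [hprod y, hco y i, hco y j]
    ring
  rw [hint, integral_const_mul]
  have htrans := integral_sub_right_eq_self (μ := (volume : Measure (Fin d → ℝ)))
    (fun v : Fin d → ℝ => (v i + c i) * (v j + c j) *
      ((Real.sqrt ((2*π)^d * S'.det))⁻¹ * Real.exp (-(1/2:ℝ) * (v ⬝ᵥ S'⁻¹ *ᵥ v)))) m'
  rw [show (∫ y : Fin d → ℝ, ((y - m') i + c i) * ((y - m') j + c j) *
      ((Real.sqrt ((2*π)^d * S'.det))⁻¹ *
        Real.exp (-(1/2:ℝ) * ((y - m') ⬝ᵥ S'⁻¹ *ᵥ (y - m')))))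
    = ∫ v : Fin d → ℝ, (v i + c i) * (v j + c j) *
      ((Real.sqrt ((2*π)^d * S'.det))⁻¹ * Real.exp (-(1/2:ℝ) * (v ⬝ᵥ S'⁻¹ *ᵥ v)))
    from htrans]
  rw [momE S' hS' c i j]
  congr 1
  simp only [hS'def, hcdef, Matrix.add_apply, Matrix.smul_apply, Matrix.vecMulVec_apply,
    smul_eq_mul, Pi.sub_apply]
  ring

end Aux
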